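/- Let g₂ : ℂ² → ℂ² be the polynomial map g₂(p,q) = (4p + p² − 4q, 12p² − 8q − 6pq + 2q² − p³), let C_C = {(p,q) ∈ ℂ² : p³ = q²}, and let E = {(0,0), (1,−1), (9,27)}. Then: (1) for every (a,b) ∈ C_C \ E, the fiber g₂⁻¹(a,b) has exactly 3 elements, of which exactly two lie on C_C and the remaining one lies on the line {(p,q) : 3p − q − 4 = 0}; (2) for every (a,b) ∈ E, the fiber g₂⁻¹(a,b) has exactly 2 elements. -/

import Mathlib

/-- The degree-2 Chebyshev morphism on ℂ²/D₃ ≅ ℂ². -/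
noncomputable def g2 (pq : ℂ × ℂ) : ℂ × ℂ :=
  (4 * pq.1 + pq.1 ^ 2 - 4 * pq.2,
   12 * pq.1 ^ 2 - 8 * pq.2 - 6 * pq.1 * pq.2 + 2 * pq.2 ^ 2 - pq.1 ^ 3)

lemma ncard_triple {α : Type*} (x y z : α) (hxy : x ≠ y) (hxz : x ≠ z) (hyz : y ≠ z) :
    ({x, y, z} : Set α).ncard = 3 := by
  rw [Set.ncard_insert_of_notMem (by simp [hxy, hxz]) (Set.toFinite _), Set.ncard_pair hyz]

lemma fiber_eq (s r : ℂ) (hr : r ^ 2 = 1 + s) :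
    g2 ⁻¹' {(s ^ 2, s ^ 3)} =
      {((4 : ℂ) - s, 8 - 3 * s), ((1 + r) ^ 2, (1 + r) ^ 3), ((1 - r) ^ 2, (1 - r) ^ 3)} := by
  ext ⟨p, q⟩
  simp only [Set.mem_preimage, Set.mem_singleton_iff, Set.mem_insert_iff, g2, Prod.mk.injEq]
  constructor
  · rintro ⟨h1, h2⟩
    have hq : q = (p ^ 2 + 4 * p - s ^ 2) / 4 := by linear_combination (-1/4 : ℂ) * h1
    subst hq
    have hQ : (p - (4 - s)) ^ 2 * ((p - (2 + s + 2 * r)) * (p - (2 + s - 2 * r))) = 0 := by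
      linear_combination 8 * h2 - 4 * (p - (4 - s)) ^ 2 * hr
    rcases mul_eq_zero.1 hQ with h | h
    · have hp : p = 4 - s := by
        have h' := pow_eq_zero_iff (by norm_num : (2:ℕ) ≠ 0) |>.1 h
        linear_combination h'
      exact Or.inl ⟨hp, by rw [hp]; ring⟩
    · rcases mul_eq_zero.1 h with h | h
      · have hp : p = 2 + s + 2 * r := by linear_combination h
        refine Or.inr (Or.inl ⟨by linear_combination hp - hr, ?_⟩)
        rw [hp]; linear_combination (-r - 2) * hr
      · have hp : p = 2 + s - 2 * r := by linear_combination h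
        refine Or.inr (Or.inr ⟨by linear_combination hp - hr, ?_⟩)
        rw [hp]; linear_combination (r - 2) * hr
  · rintro (⟨hp, hq⟩ | ⟨hp, hq⟩ | ⟨hp, hq⟩) <;> subst hp <;> subst hq
    · exact ⟨by ring, by ring⟩
    · exact ⟨by linear_combination (r ^ 2 - 1 + s) * hr,
        by linear_combination ((r ^ 2 - 1) ^ 2 + (r ^ 2 - 1) * s + s ^ 2) * hr⟩
    · exact ⟨by linear_combination (r ^ 2 - 1 + s) * hr,
        by linear_combination ((r ^ 2 - 1) ^ 2 + (r ^ 2 - 1) * s + s ^ 2) * hr⟩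

/-- Fibers of `g₂` over the cuspidal cubic `C_C = {p³ = q²}`:
(1) over a point of `C_C` away from `E = {(0,0), (1,−1), (9,27)}` the fiber has
exactly 3 points, exactly two of which lie on `C_C`, the remaining one lying on
the line `3p − q − 4 = 0`; (2) over a point of `E` the fiber has exactly 2 points. -/
theorem g2_fibers_over_cuspidal_cubic :
    (∀ a b : ℂ, a ^ 3 = b ^ 2 →
      (a, b) ∉ ({((0 : ℂ), (0 : ℂ)), (1, -1), (9, 27)} : Set (ℂ × ℂ)) →
      (g2 ⁻¹' {(a, b)}).ncard = 3 ∧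
      (g2 ⁻¹' {(a, b)} ∩ {pq : ℂ × ℂ | pq.1 ^ 3 = pq.2 ^ 2}).ncard = 2 ∧
      (g2 ⁻¹' {(a, b)} \ {pq : ℂ × ℂ | pq.1 ^ 3 = pq.2 ^ 2}).ncard = 1 ∧
      (g2 ⁻¹' {(a, b)} \ {pq : ℂ × ℂ | pq.1 ^ 3 = pq.2 ^ 2})
        ⊆ {pq : ℂ × ℂ | 3 * pq.1 - pq.2 - 4 = 0}) ∧
    (∀ a b : ℂ,
      (a, b) ∈ ({((0 : ℂ), (0 : ℂ)), (1, -1), (9, 27)} : Set (ℂ × ℂ)) →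
      (g2 ⁻¹' {(a, b)}).ncard = 2) := by
  constructor
  · intro a b hab hE
    simp only [Set.mem_insert_iff, Set.mem_singleton_iff, Prod.mk.injEq, not_or, not_and] at hE
    obtain ⟨hE1, hE2, hE3⟩ := hE
    have ha : a ≠ 0 := by
      intro h; subst h
      have hb2 : b ^ 2 = 0 := by linear_combination -hab
      exact hE1 rfl (pow_eq_zero_iff (by norm_num : (2:ℕ) ≠ 0) |>.1 hb2)
    have hb : b ≠ 0 := by
      intro h; subst h
      exact ha (pow_eq_zero_iff (by norm_num : (3:ℕ) ≠ 0) |>.1 (by linear_combination hab))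
    set s : ℂ := b / a with hs
    have hs2 : s ^ 2 = a := by rw [hs, div_pow, div_eq_iff (pow_ne_zero 2 ha)]; linear_combination -hab
    have hs3 : s ^ 3 = b := by rw [hs, div_pow, div_eq_iff (pow_ne_zero 3 ha)]; linear_combination -b * hab
    have hs0 : s ≠ 0 := div_ne_zero hb ha
    have hsm1 : s ≠ -1 := by
      intro h; exact hE2 (by rw [← hs2, h]; norm_num) (by rw [← hs3, h]; norm_num)
    have hsn0 : s ≠ 0 := hs0
    have hs3' : s ≠ 3 := by
      intro h; exact hE3 (by rw [← hs2, h]; norm_num) (by rw [← hs3, h]; norm_num)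
    obtain ⟨r, hr⟩ := IsAlgClosed.exists_pow_nat_eq (1 + s) (n := 2) (by norm_num)
    have hr0 : r ≠ 0 := by
      intro h; apply hsm1; have : (0:ℂ) = 1 + s := by rw [← hr, h]; ring
      linear_combination -this
    have hfib : g2 ⁻¹' {(a, b)} =
        {((4 : ℂ) - s, 8 - 3 * s), ((1 + r) ^ 2, (1 + r) ^ 3), ((1 - r) ^ 2, (1 - r) ^ 3)} := by
      rw [← hs2, ← hs3, fiber_eq s r hr]
    -- distinctness
    have key : ∀ t : ℂ, t ^ 2 = 1 + s → (4 - s : ℂ) ≠ (1 + t) ^ 2 := by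
      intro t ht h
      have hrv : t = 1 - s := by linear_combination -h / 2 - ht / 2
      have hss : s * (s - 3) = 0 := by
        rw [hrv] at ht; linear_combination ht
      rcases mul_eq_zero.1 hss with h' | h'
      · exact hsn0 h'
      · exact hs3' (by linear_combination h')
    have d12 : ((4 : ℂ) - s, 8 - 3 * s) ≠ ((1 + r) ^ 2, (1 + r) ^ 3) := by
      intro h; exact key r hr (congrArg Prod.fst h)
    have d13 : ((4 : ℂ) - s, 8 - 3 * s) ≠ ((1 - r) ^ 2, (1 - r) ^ 3) := by
      intro h
      exact key (-r) (by linear_combination hr) (by rw [← sub_eq_add_neg]; exact congrArg Prod.fst h)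
    have d23 : (((1 + r) ^ 2 : ℂ), (1 + r) ^ 3) ≠ ((1 - r) ^ 2, (1 - r) ^ 3) := by
      intro h
      have h1 : ((1 + r) ^ 2 : ℂ) = (1 - r) ^ 2 := congrArg Prod.fst h
      exact hr0 (by linear_combination h1 / 4)
    have hLnot : ¬ ((4 - s : ℂ) ^ 3 = (8 - 3 * s) ^ 2) := by
      intro h
      have hss : s ^ 2 * (3 - s) = 0 := by linear_combination h
      rcases mul_eq_zero.1 hss with h' | h'
      · exact hsn0 (pow_eq_zero_iff (by norm_num : (2:ℕ) ≠ 0) |>.1 h')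
      · exact hs3' (by linear_combination -h')
    have hinter : g2 ⁻¹' {(a, b)} ∩ {pq : ℂ × ℂ | pq.1 ^ 3 = pq.2 ^ 2} =
        {(((1 + r) ^ 2 : ℂ), (1 + r) ^ 3), ((1 - r) ^ 2, (1 - r) ^ 3)} := by
      rw [hfib]; ext x
      simp only [Set.mem_inter_iff, Set.mem_insert_iff, Set.mem_singleton_iff, Set.mem_setOf_eq]
      constructor
      · rintro ⟨(rfl | rfl | rfl), hc⟩
        · exact absurd hc hLnot
        · exact Or.inl rfl
        · exact Or.inr rfl
      · rintro (rfl | rfl)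
        · exact ⟨Or.inr (Or.inl rfl), by ring⟩
        · exact ⟨Or.inr (Or.inr rfl), by ring⟩
    have hdiff : g2 ⁻¹' {(a, b)} \ {pq : ℂ × ℂ | pq.1 ^ 3 = pq.2 ^ 2} =
        {((4 : ℂ) - s, 8 - 3 * s)} := by
      rw [hfib]; ext x
      simp only [Set.mem_diff, Set.mem_insert_iff, Set.mem_singleton_iff, Set.mem_setOf_eq]
      constructor
      · rintro ⟨(rfl | rfl | rfl), hc⟩
        · rfl
        · exact absurd (by ring) hc
        · exact absurd (by ring) hc
      · rintro rfl
        exact ⟨Or.inl rfl, hLnot⟩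
    refine ⟨by rw [hfib]; exact ncard_triple _ _ _ d12 d13 d23,
      by rw [hinter]; exact Set.ncard_pair d23,
      by rw [hdiff]; exact Set.ncard_singleton _, ?_⟩
    rw [hdiff]
    rintro x rfl
    show 3 * (4 - s) - (8 - 3 * s) - 4 = 0
    ring
  · intro a b hE
    simp only [Set.mem_insert_iff, Set.mem_singleton_iff, Prod.mk.injEq] at hE
    rcases hE with ⟨rfl, rfl⟩ | ⟨rfl, rfl⟩ | ⟨rfl, rfl⟩
    · have h := fiber_eq 0 1 (by norm_num)
      norm_num at h
      change (g2 ⁻¹' {((0 : ℂ), (0 : ℂ))}).ncard = 2; rw [h]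
      exact Set.ncard_pair (by simp [Prod.ext_iff])
    · have h := fiber_eq (-1) 0 (by norm_num)
      norm_num at h
      rw [h]
      exact Set.ncard_pair (by simp [Prod.ext_iff])
    · have h := fiber_eq 3 2 (by norm_num)
      norm_num at h
      rw [h]
      exact Set.ncard_pair (by simp [Prod.ext_iff])
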